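/- Let B be a binomial ring, A an associative unital B-algebra, and n a natural number. The ideal I_n ⊆ B[A] (an ideal for the sum multiplication [x][y] = [x+y]) is also a two-sided ideal for the product multiplication [a] ⋆ [b] = [ab]: for every ω ∈ B[A] and every ν ∈ I_n, both ω ⋆ ν and ν ⋆ ω lie in I_n. Consequently the product multiplication descends to the augmentation algebra B[A]_n = B[A]/I_n. -/

import Mathlib

set_option linter.unusedSectionVars false

open Finset

universe u

variable (B : Type u) [CommRing B] [BinomialRing B]
variable (M : Type u) [AddCommGroup M] [Module B M]

/-- The basis symbol `[x]` in the monoid algebra `B[M]` of the additive monoid `M`. -/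
noncomputable def brk (x : M) : AddMonoidAlgebra B M := AddMonoidAlgebra.single x 1

/-- The ideal `I_n ⊆ B[M]` (for the sum multiplication `[x][y] = [x+y]`), generated by the
`(n+1)`-fold deviations `[x_1 ⊥ ⋯ ⊥ x_{n+1}] = ∏ ([x_i] − [0])` and the elements
`[r·x] − ∑_{k=0}^n binom(r,k) ([x] − [0])^k`. -/
noncomputable def augIdeal (n : ℕ) : Ideal (AddMonoidAlgebra B M) :=
  Ideal.span
    ({ω | ∃ x : Fin (n + 1) → M, ω = ∏ i, (brk B M (x i) - brk B M 0)} ∪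
      {ω | ∃ (r : B) (x : M), ω =
        brk B M (r • x) -
          ∑ k ∈ Finset.range (n + 1), Ring.choose r k • (brk B M x - brk B M 0) ^ k})

/-- The `n`-th augmentation algebra `B[M]_n = B[M]/I_n`, as a `B`-module. -/
noncomputable def augAlgebra (n : ℕ) : Type u :=
  AddMonoidAlgebra B M ⧸ (augIdeal B M n).restrictScalars B

noncomputable instance (n : ℕ) : AddCommGroup (augAlgebra B M n) :=
  inferInstanceAs (AddCommGroup (AddMonoidAlgebra B M ⧸ (augIdeal B M n).restrictScalars B))

noncomputable instance (n : ℕ) : Module B (augAlgebra B M n) :=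
  inferInstanceAs (Module B (AddMonoidAlgebra B M ⧸ (augIdeal B M n).restrictScalars B))

/-- The quotient map `B[M] → B[M]_n`. -/
noncomputable def augMk (n : ℕ) : AddMonoidAlgebra B M →ₗ[B] augAlgebra B M n :=
  ((augIdeal B M n).restrictScalars B).mkQ

variable (A : Type u) [Ring A] [Algebra B A]

/-- The product multiplication `[a] ⋆ [b] = [ab]` on `B[A]`, for a `B`-algebra `A`. -/
noncomputable def starMul (ω ν : AddMonoidAlgebra B A) : AddMonoidAlgebra B A :=
  Finsupp.sum ω.coeff fun x a => Finsupp.sum ν.coeff fun y b => AddMonoidAlgebra.single (x * y) (a * b)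

theorem auxM_add_mul (f g ν : MonoidAlgebra B A) : (f + g) * ν = f * ν + g * ν := add_mul f g ν
theorem auxM_mul_add (ν f g : MonoidAlgebra B A) : ν * (f + g) = ν * f + ν * g := mul_add ν f g
theorem auxM_zero_mul (ν : MonoidAlgebra B A) : (0 : MonoidAlgebra B A) * ν = 0 := zero_mul ν
theorem auxM_mul_zero (ν : MonoidAlgebra B A) : ν * (0 : MonoidAlgebra B A) = 0 := mul_zero ν

theorem aux_starMul_eq (ω ν : AddMonoidAlgebra B A) : starMul B A ω ν =
    AddMonoidAlgebra.ofCoeff ((MonoidAlgebra.ofCoeff ω.coeff * MonoidAlgebra.ofCoeff ν.coeff :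
      MonoidAlgebra B A).coeff) := by
  rw [MonoidAlgebra.mul_def]
  simp only [starMul, MonoidAlgebra.coeff_finsuppSum, MonoidAlgebra.coeff_single,
    AddMonoidAlgebra.ofCoeff_finsuppSum, AddMonoidAlgebra.ofCoeff_single, MonoidAlgebra.coeff_ofCoeff]

theorem aux_mapDomain_mem (n : ℕ) (h : A →+ A) (hh : ∀ (r : B) (y : A), h (r • y) = r • h y)
    {ν : AddMonoidAlgebra B A} (hν : ν ∈ augIdeal B A n) :
    AddMonoidAlgebra.mapDomainRingHom B h ν ∈ augIdeal B A n := by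
  have hb : ∀ y : A, AddMonoidAlgebra.mapDomainRingHom B h (brk B A y) = brk B A (h y) := by
    intro y
    show AddMonoidAlgebra.mapDomain h (AddMonoidAlgebra.single y 1) = AddMonoidAlgebra.single (h y) 1
    exact AddMonoidAlgebra.mapDomain_single
  have hs : ∀ (r : B) (w : AddMonoidAlgebra B A),
      AddMonoidAlgebra.mapDomainRingHom B h (r • w)
        = r • AddMonoidAlgebra.mapDomainRingHom B h w := fun r w => by
    show AddMonoidAlgebra.mapDomain h (r • w) = r • AddMonoidAlgebra.mapDomain h w
    ext; simp [Finsupp.mapDomain_smul]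
  have key : augIdeal B A n ≤
      Ideal.comap (AddMonoidAlgebra.mapDomainRingHom B h) (augIdeal B A n) := by
    rw [augIdeal, Ideal.span_le]
    rintro ω (⟨x, rfl⟩ | ⟨r, y, rfl⟩) <;>
      simp only [SetLike.mem_coe, Ideal.mem_comap]
    · refine Ideal.subset_span (Or.inl ⟨fun i => h (x i), ?_⟩)
      rw [map_prod]
      exact Finset.prod_congr rfl fun i _ => by rw [map_sub, hb, hb, map_zero]
    · refine Ideal.subset_span (Or.inr ⟨r, h y, ?_⟩)
      rw [map_sub, hb, hh, map_sum]
      congr 1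
      refine Finset.sum_congr rfl fun k _ => ?_
      rw [hs, map_pow, map_sub, hb, hb, map_zero]
  exact key hν

theorem aux_single_starMul (x : A) (a : B) (ν : AddMonoidAlgebra B A) :
    starMul B A (AddMonoidAlgebra.single x a) ν
      = a • AddMonoidAlgebra.mapDomainRingHom B (AddMonoidHom.mulLeft x) ν := by
  rw [starMul, AddMonoidAlgebra.coeff_single, Finsupp.sum_single_index (by simp)]
  show (Finsupp.sum ν.coeff fun y b => AddMonoidAlgebra.single (x * y) (a * b))
      = a • AddMonoidAlgebra.mapDomain (fun y => x * y) ν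
  rw [AddMonoidAlgebra.mapDomain, Finsupp.mapDomain, AddMonoidAlgebra.ofCoeff_finsuppSum,
    Finsupp.smul_sum]
  exact Finsupp.sum_congr fun y _ => by
    rw [AddMonoidAlgebra.ofCoeff_single, AddMonoidAlgebra.smul_single, smul_eq_mul]

theorem aux_starMul_single (x : A) (a : B) (ν : AddMonoidAlgebra B A) :
    starMul B A ν (AddMonoidAlgebra.single x a)
      = a • AddMonoidAlgebra.mapDomainRingHom B (AddMonoidHom.mulRight x) ν := by
  rw [starMul]
  show _ = a • AddMonoidAlgebra.mapDomain (fun y => y * x) ν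
  rw [AddMonoidAlgebra.mapDomain, Finsupp.mapDomain, AddMonoidAlgebra.ofCoeff_finsuppSum,
    Finsupp.smul_sum]
  refine Finsupp.sum_congr fun y c => ?_
  rw [AddMonoidAlgebra.coeff_single, Finsupp.sum_single_index (by simp),
    AddMonoidAlgebra.ofCoeff_single, AddMonoidAlgebra.smul_single, smul_eq_mul, mul_comm]

theorem aux_starMul_mem_left (n : ℕ) (ω : AddMonoidAlgebra B A) {ν : AddMonoidAlgebra B A}
    (hν : ν ∈ augIdeal B A n) : starMul B A ω ν ∈ augIdeal B A n := by
  induction ω using AddMonoidAlgebra.induction_linear with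
  | zero =>
      have : starMul B A 0 ν = 0 := by rw [aux_starMul_eq]; simp
      rw [this]; exact zero_mem _
  | add f g hf hg =>
      have : starMul B A (f + g) ν = starMul B A f ν + starMul B A g ν := by
        rw [aux_starMul_eq, aux_starMul_eq, aux_starMul_eq]; simp [add_mul]
      rw [this]; exact add_mem hf hg
  | single x a =>
      rw [aux_single_starMul, Algebra.smul_def]
      exact Ideal.mul_mem_left _ _
        (aux_mapDomain_mem B A n _ (fun r y => mul_smul_comm r x y) hν)

theorem aux_starMul_mem_right (n : ℕ) (ω : AddMonoidAlgebra B A) {ν : AddMonoidAlgebra B A}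
    (hν : ν ∈ augIdeal B A n) : starMul B A ν ω ∈ augIdeal B A n := by
  induction ω using AddMonoidAlgebra.induction_linear with
  | zero =>
      have : starMul B A ν 0 = 0 := by rw [aux_starMul_eq]; simp
      rw [this]; exact zero_mem _
  | add f g hf hg =>
      have : starMul B A ν (f + g) = starMul B A ν f + starMul B A ν g := by
        rw [aux_starMul_eq, aux_starMul_eq, aux_starMul_eq]; simp [mul_add]
      rw [this]; exact add_mem hf hg
  | single x a =>
      rw [aux_starMul_single, Algebra.smul_def]
      exact Ideal.mul_mem_left _ _
        (aux_mapDomain_mem B A n _ (fun r y => smul_mul_assoc r y x) hν)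

/-- `I_n` is a two-sided ideal for the product multiplication `⋆`, and hence `⋆` descends
to the augmentation algebra `B[A]_n = B[A]/I_n`. -/
theorem augIdeal_starMul_stable (B : Type u) [CommRing B] [BinomialRing B]
    (A : Type u) [Ring A] [Algebra B A] (n : ℕ) :
    (∀ ω : AddMonoidAlgebra B A, ∀ ν ∈ augIdeal B A n,
        starMul B A ω ν ∈ augIdeal B A n ∧ starMul B A ν ω ∈ augIdeal B A n) ∧
      ∃ star' : augAlgebra B A n → augAlgebra B A n → augAlgebra B A n,
        ∀ ω ν : AddMonoidAlgebra B A,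
          star' (augMk B A n ω) (augMk B A n ν) = augMk B A n (starMul B A ω ν) := by

  constructor
  · exact fun ω ν hν => ⟨aux_starMul_mem_left B A n ω hν, aux_starMul_mem_right B A n ω hν⟩
  · refine ⟨Quotient.map₂ (starMul B A) ?_, fun ω ν => rfl⟩
    rintro ω₁ ω₂ hω ν₁ ν₂ hν
    have hω' : ω₁ - ω₂ ∈ augIdeal B A n := (Submodule.quotientRel_def _).mp hω
    have hν' : ν₁ - ν₂ ∈ augIdeal B A n := (Submodule.quotientRel_def _).mp hν
    refine (Submodule.quotientRel_def _).mpr ?_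
    have : starMul B A ω₁ ν₁ - starMul B A ω₂ ν₂
        = starMul B A (ω₁ - ω₂) ν₁ + starMul B A ω₂ (ν₁ - ν₂) := by
      rw [aux_starMul_eq, aux_starMul_eq, aux_starMul_eq, aux_starMul_eq]
      apply AddMonoidAlgebra.coeff_injective
      simp [sub_mul, mul_sub]
    rw [this]
    exact add_mem (aux_starMul_mem_right B A n ν₁ hω') (aux_starMul_mem_left B A n ω₂ hν')
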